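/- arXiv:2512.00507 — 4 statements merged into one kernel-verified Lean document; each statement's English description precedes it below -/
import Mathlib

section
/- With the notation above, for each 1 ≤ i ≤ N−1, the values P_N^k(−r_i) and P_N^k(−r_{i+1}) have opposite (nonzero) signs, and hence by the intermediate value theorem P_N^k has a real root in the open interval (−r_{i+1}, −r_i). -/
open Polynomial Finset

/-- The characteristic polynomial `P_N^k` associated with the extended Burgers model. -/
noncomputable def PNk (N : ℕ) (D : ℝ) (b r : Fin N → ℝ) (k : ℕ) : Polynomial ℝ :=
  (C D + C (1 / (2 * (k : ℝ) - 1) ^ 2) * X ^ 2) * ∏ j, (X + C (r j))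
    - ∑ i, C (b i) * ∏ j ∈ univ.erase i, (X + C (r j))

lemma eval_PNk (N : ℕ) (D : ℝ) (b r : Fin N → ℝ) (k : ℕ) (m : Fin N) :
    (PNk N D b r k).eval (-(r m)) = -(b m * ∏ t ∈ univ.erase m, (r t - r m)) := by
  simp only [PNk, eval_sub, eval_mul, eval_add, eval_C, eval_pow, eval_X, eval_prod,
    eval_finset_sum]
  rw [Finset.prod_eq_zero (Finset.mem_univ m) (by ring), mul_zero, zero_sub,
    Finset.sum_eq_single m
      (fun t _ ht => by
        rw [Finset.prod_eq_zero (Finset.mem_erase.2 ⟨Ne.symm ht, Finset.mem_univ m⟩) (by ring),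
          mul_zero])
      (fun h => absurd (Finset.mem_univ m) h)]
  congr 1
  congr 1
  exact Finset.prod_congr rfl fun t _ => by ring

theorem stmt2 (N : ℕ) (D : ℝ) (b r : Fin N → ℝ) (k : ℕ) (hk : 1 ≤ k)
    (hr : StrictMono r) (hrpos : ∀ i, 0 < r i) (hb : ∀ i, 0 < b i)
    (i j : Fin N) (hij : (i : ℕ) + 1 = (j : ℕ)) :
    (PNk N D b r k).eval (-(r i)) * (PNk N D b r k).eval (-(r j)) < 0 ∧
      ∃ a ∈ Set.Ioo (-(r j)) (-(r i)), (PNk N D b r k).eval a = 0 := by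
  have hijlt : i < j := by
    rw [Fin.lt_def]; omega
  have hne : j ≠ i := (Fin.lt_iff_val_lt_val.mp hijlt).ne'.imp fun h => by rw [h]
  have hrij : r i < r j := hr hijlt
  -- products
  set S : Finset (Fin N) := (univ.erase i).erase j with hS
  have hsplit_i : ∏ t ∈ univ.erase i, (r t - r i)
      = (r j - r i) * ∏ t ∈ S, (r t - r i) := by
    exact (Finset.mul_prod_erase _ _ (Finset.mem_erase.2 ⟨hne, Finset.mem_univ j⟩)).symm
  have hsplit_j : ∏ t ∈ univ.erase j, (r t - r j)
      = (r i - r j) * ∏ t ∈ S, (r t - r j) := by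
    rw [hS, Finset.erase_right_comm]
    exact (Finset.mul_prod_erase _ _
      (Finset.mem_erase.2 ⟨fun h => hne h.symm, Finset.mem_univ i⟩)).symm
  have hSpos : 0 < ∏ t ∈ S, ((r t - r i) * (r t - r j)) := by
    apply Finset.prod_pos
    intro t ht
    rw [hS, Finset.mem_erase, Finset.mem_erase] at ht
    have htj : t ≠ j := ht.1
    have hti : t ≠ i := ht.2.1
    rcases lt_or_gt_of_ne (fun h : (t : ℕ) = (i : ℕ) => hti (Fin.ext h)) with h | h
    · have h1 : r t < r i := hr (Fin.lt_iff_val_lt_val.mpr h)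
      have h2 : r t < r j := h1.trans hrij
      nlinarith
    · have h' : (j : ℕ) < (t : ℕ) := by
        rcases lt_or_gt_of_ne (fun hh : (t : ℕ) = (j : ℕ) => htj (Fin.ext hh)) with hh | hh
        · omega
        · exact hh
      have h1 : r j < r t := hr (Fin.lt_iff_val_lt_val.mpr h')
      have h2 : r i < r t := hrij.trans h1
      nlinarith
  have hprodneg : (∏ t ∈ univ.erase i, (r t - r i)) * (∏ t ∈ univ.erase j, (r t - r j)) < 0 := by
    rw [hsplit_i, hsplit_j, mul_mul_mul_comm, ← Finset.prod_mul_distrib]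
    exact mul_neg_of_neg_of_pos (by nlinarith) hSpos
  have hmul : (PNk N D b r k).eval (-(r i)) * (PNk N D b r k).eval (-(r j)) < 0 := by
    rw [eval_PNk, eval_PNk]
    have hbi := hb i
    have hbj := hb j
    nlinarith [mul_neg_of_pos_of_neg (mul_pos hbi hbj) hprodneg]
  refine ⟨hmul, ?_⟩
  have hle : -(r j) ≤ -(r i) := by linarith
  have hcont : ContinuousOn (fun x => (PNk N D b r k).eval x) (Set.Icc (-(r j)) (-(r i))) :=
    (PNk N D b r k).continuous.continuousOn
  rcases lt_or_gt_of_ne (fun h : (PNk N D b r k).eval (-(r j)) = 0 => by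
      rw [h, mul_zero] at hmul; exact lt_irrefl 0 hmul) with h | h
  · -- f(-r j) < 0, so f(-r i) > 0
    have h2 : 0 < (PNk N D b r k).eval (-(r i)) := by nlinarith
    obtain ⟨a, ha, hfa⟩ := intermediate_value_Ioo hle hcont (Set.mem_Ioo.2 ⟨h, h2⟩)
    exact ⟨a, ha, hfa⟩
  · have h2 : (PNk N D b r k).eval (-(r i)) < 0 := by nlinarith
    obtain ⟨a, ha, hfa⟩ := intermediate_value_Ioo' hle hcont (Set.mem_Ioo.2 ⟨h2, h⟩)
    exact ⟨a, ha, hfa⟩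
end

section
/- With the notation above, P_N^k has at least N distinct real roots a_N < a_{N−1} < ... < a_1 satisfying the interlacing property −r_N < a_N < −r_{N−1} < a_{N−1} < ... < −r_2 < a_2 < −r_1 < a_1, provided D + λ²/(2k−1)² > 0 for all λ in [−r_N, 0]. -/
open Polynomial Finset

/-- Intermediate value theorem for a sign change. -/
lemma sign_change {f : ℝ → ℝ} (hf : Continuous f) {x y : ℝ} (hxy : x < y)
    (h : f x * f y < 0) : ∃ z, x < z ∧ z < y ∧ f z = 0 := by
  rcases lt_or_ge (f x) 0 with h1 | h1
  · have h2 : 0 < f y := by nlinarith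
    obtain ⟨z, hz, hz0⟩ := intermediate_value_Ioo hxy.le hf.continuousOn
      (Set.mem_Ioo.mpr ⟨h1, h2⟩)
    exact ⟨z, hz.1, hz.2, hz0⟩
  · have h1' : 0 < f x := by
      rcases h1.lt_or_eq with h' | h'
      · exact h'
      · rw [← h', zero_mul] at h; exact absurd h (lt_irrefl 0)
    have h2 : f y < 0 := by nlinarith
    obtain ⟨z, hz, hz0⟩ := intermediate_value_Ioo' hxy.le hf.continuousOn
      (Set.mem_Ioo.mpr ⟨h2, h1'⟩)
    exact ⟨z, hz.1, hz.2, hz0⟩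

lemma eval_PNk_neg_r (N : ℕ) (D : ℝ) (b r : Fin N → ℝ) (k : ℕ) (i : Fin N) :
    (PNk N D b r k).eval (-(r i)) = -(b i * ∏ l ∈ univ.erase i, (r l - r i)) := by
  unfold PNk
  rw [eval_sub, eval_mul, eval_prod]
  rw [Finset.prod_eq_zero (mem_univ i) (by simp), mul_zero, zero_sub, eval_finset_sum]
  rw [Finset.sum_eq_single i]
  · rw [eval_mul, eval_C, eval_prod]
    congr 1
    congr 1
    refine Finset.prod_congr rfl fun l _ => ?_
    simp [neg_add_eq_sub]
  · intro j _ hji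
    rw [eval_mul, eval_prod]
    rw [Finset.prod_eq_zero (Finset.mem_erase.mpr ⟨Ne.symm hji, mem_univ i⟩) (by simp)]
    exact mul_zero _
  · intro h; exact absurd (mem_univ i) h

lemma sign_PNk (N : ℕ) (D : ℝ) (b r : Fin N → ℝ) (k : ℕ)
    (hr : StrictMono r) (hb : ∀ i, 0 < b i) (i : Fin N) :
    (-1 : ℝ) ^ (i : ℕ) * (PNk N D b r k).eval (-(r i)) < 0 := by
  rw [eval_PNk_neg_r]
  have hsplit : univ.erase i = Finset.Iio i ∪ Finset.Ioi i := by
    ext l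
    simp only [mem_erase, mem_univ, and_true, mem_union, mem_Iio, mem_Ioi]
    exact ⟨fun h => h.lt_or_gt, fun h => h.elim ne_of_lt ne_of_gt⟩
  have hdisj : Disjoint (Finset.Iio i) (Finset.Ioi i) :=
    (Finset.disjoint_Ioi_Iio i).symm
  rw [hsplit, Finset.prod_union hdisj]
  have h1 : ∏ l ∈ Finset.Iio i, (r l - r i)
      = (-1 : ℝ) ^ (i : ℕ) * ∏ l ∈ Finset.Iio i, (r i - r l) := by
    rw [← Fin.card_Iio i]
    calc ∏ l ∈ Finset.Iio i, (r l - r i)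
        = ∏ l ∈ Finset.Iio i, (-1) * (r i - r l) :=
          Finset.prod_congr rfl fun l _ => by ring
      _ = (-1 : ℝ) ^ (Finset.Iio i).card * ∏ l ∈ Finset.Iio i, (r i - r l) := by
          rw [Finset.prod_mul_distrib, Finset.prod_const]
  have hA : 0 < ∏ l ∈ Finset.Iio i, (r i - r l) :=
    Finset.prod_pos fun l hl => sub_pos.mpr (hr (Finset.mem_Iio.mp hl))
  have hB : 0 < ∏ l ∈ Finset.Ioi i, (r l - r i) :=
    Finset.prod_pos fun l hl => sub_pos.mpr (hr (Finset.mem_Ioi.mp hl))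
  have hpow : ((-1 : ℝ) ^ (i : ℕ)) * ((-1 : ℝ) ^ (i : ℕ)) = 1 := by
    rw [← pow_add]
    exact Even.neg_one_pow ⟨(i : ℕ), rfl⟩
  rw [h1]
  set t : ℝ := (-1 : ℝ) ^ (i : ℕ) with ht
  set A' : ℝ := ∏ l ∈ Finset.Iio i, (r i - r l) with hA'
  set B' : ℝ := ∏ l ∈ Finset.Ioi i, (r l - r i) with hB'
  have heq : t * -(b i * ((t * A') * B')) = -(t * t * (b i * (A' * B'))) := by ring
  rw [heq, hpow, one_mul]
  exact neg_lt_zero.mpr (mul_pos (hb i) (mul_pos hA hB))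

lemma tendsto_PNk (N : ℕ) (D : ℝ) (b r : Fin N → ℝ) (k : ℕ) (hk : 1 ≤ k) :
    Filter.Tendsto (fun x => (PNk N D b r k).eval x) Filter.atTop Filter.atTop := by
  set c : ℝ := 1 / (2 * (k : ℝ) - 1) ^ 2 with hc_def
  have hk1 : (1 : ℝ) ≤ (k : ℝ) := by exact_mod_cast hk
  have hc : 0 < c := by
    have h2 : (0 : ℝ) < (2 * (k : ℝ) - 1) ^ 2 := by nlinarith
    exact div_pos one_pos h2
  set A : Polynomial ℝ := C D + C c * X ^ 2 with hA_def
  set B : Polynomial ℝ := ∏ j, (X + C (r j)) with hB_def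
  set R : Polynomial ℝ := ∑ i, C (b i) * ∏ j ∈ univ.erase i, (X + C (r j)) with hR_def
  have hBmonic : B.Monic := monic_prod_of_monic _ _ fun j _ => monic_X_add_C _
  have hBdeg : B.natDegree = N := by
    rw [hB_def, natDegree_prod_of_monic _ _ fun j _ => monic_X_add_C _]
    simp [natDegree_X_add_C]
  have hdlt : (C D).degree < (C c * X ^ 2).degree := by
    rw [degree_C_mul_X_pow _ hc.ne']
    exact lt_of_le_of_lt degree_C_le (by norm_num)
  have hAdeg : A.degree = 2 := by
    rw [hA_def, degree_add_eq_right_of_degree_lt hdlt, degree_C_mul_X_pow _ hc.ne']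
    norm_cast
  have hAlead : A.leadingCoeff = c := by
    rw [hA_def, leadingCoeff_add_of_degree_lt hdlt, leadingCoeff_C_mul_X_pow]
  have hAne : A ≠ 0 := fun h => by simp [h] at hAdeg
  have hQdeg : (A * B).degree = ((N + 2 : ℕ) : WithBot ℕ) := by
    rw [degree_mul, hAdeg, degree_eq_natDegree hBmonic.ne_zero, hBdeg]
    push_cast
    ring
  have hQlead : (A * B).leadingCoeff = c := by
    rw [leadingCoeff_mul, hAlead, hBmonic.leadingCoeff, mul_one]
  have hRdeg : R.degree < (A * B).degree := by
    rw [hQdeg]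
    refine lt_of_le_of_lt (degree_le_natDegree) ?_
    have hRnat : R.natDegree ≤ N - 1 := by
      refine natDegree_sum_le_of_forall_le _ _ fun i _ => ?_
      refine le_trans (natDegree_mul_le) ?_
      rw [natDegree_C, zero_add]
      refine le_trans (natDegree_prod_le _ _) ?_
      calc ∑ j ∈ univ.erase i, (X + C (r j)).natDegree
          = ∑ j ∈ univ.erase i, 1 := by
            refine Finset.sum_congr rfl fun j _ => natDegree_X_add_C _
        _ = (univ.erase i).card := by rw [Finset.sum_const, smul_eq_mul, mul_one]
        _ ≤ N - 1 := by rw [Finset.card_erase_of_mem (mem_univ i), Finset.card_univ,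
            Fintype.card_fin]
    exact lt_of_le_of_lt (Nat.cast_le.mpr hRnat) (Nat.cast_lt.mpr (by omega))
  have hPdeg : (PNk N D b r k).degree = ((N + 2 : ℕ) : WithBot ℕ) := by
    rw [PNk, ← hA_def, ← hB_def, ← hR_def, degree_sub_eq_left_of_degree_lt hRdeg, hQdeg]
  have hPlead : (PNk N D b r k).leadingCoeff = c := by
    rw [PNk, ← hA_def, ← hB_def, ← hR_def, leadingCoeff_sub_of_degree_lt hRdeg, hQlead]
  refine Polynomial.tendsto_atTop_of_leadingCoeff_nonneg _ ?_ (by rw [hPlead]; exact hc.le)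
  rw [hPdeg]
  exact_mod_cast Nat.pos_of_ne_zero (by omega)

theorem stmt4 (N : ℕ) (hN : 0 < N) (D : ℝ) (b r : Fin N → ℝ) (k : ℕ) (hk : 1 ≤ k)
    (hr : StrictMono r) (hrpos : ∀ i, 0 < r i) (hb : ∀ i, 0 < b i)
    (hD : ∀ x ∈ Set.Icc (-(r ⟨N - 1, by omega⟩)) (0 : ℝ),
      0 < D + x ^ 2 / (2 * (k : ℝ) - 1) ^ 2) :
    ∃ a : Fin N → ℝ,
      (∀ i, (PNk N D b r k).eval (a i) = 0) ∧
      (∀ i, -(r i) < a i) ∧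
      (∀ i j : Fin N, (i : ℕ) + 1 = (j : ℕ) → a j < -(r i)) := by
  set P := PNk N D b r k with hP_def
  have hcont : Continuous fun x => P.eval x := P.continuous
  have key : ∀ i : Fin N, ∃ x, P.eval x = 0 ∧ -(r i) < x ∧
      ∀ (h0 : 0 < (i : ℕ)), x < -(r ⟨(i : ℕ) - 1, by omega⟩) := by
    intro i
    rcases Nat.eq_zero_or_pos (i : ℕ) with hi0 | hipos
    · -- top root
      have hs : P.eval (-(r i)) < 0 := by
        have := sign_PNk N D b r k hr hb i
        rw [hi0] at this
        simpa using this
      have htop := tendsto_PNk N D b r k hk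
      obtain ⟨M, hM⟩ := ((htop.eventually_gt_atTop 0).and
        (Filter.eventually_gt_atTop (-(r i)))).exists
      obtain ⟨z, hz1, hz2, hz3⟩ := sign_change hcont hM.2
        (mul_neg_of_neg_of_pos hs hM.1)
      exact ⟨z, hz3, hz1, fun h0 => absurd h0 (by omega)⟩
    · have hiN : (i : ℕ) - 1 < N := by omega
      set ip : Fin N := ⟨(i : ℕ) - 1, hiN⟩ with hip_def
      have hiplt : ip < i := by
        rw [Fin.lt_def]
        simp only [hip_def]
        omega
      have hlt : -(r i) < -(r ip) := neg_lt_neg (hr hiplt)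
      have h1 := sign_PNk N D b r k hr hb ip
      have h2 := sign_PNk N D b r k hr hb i
      have hsucc : (i : ℕ) = (ip : ℕ) + 1 := by simp only [hip_def]; omega
      rw [hsucc, pow_succ] at h2
      have hpow : ((-1 : ℝ) ^ (ip : ℕ)) * ((-1 : ℝ) ^ (ip : ℕ)) = 1 := by
        rw [← pow_add]
        exact Even.neg_one_pow ⟨(ip : ℕ), rfl⟩
      have hprod : P.eval (-(r i)) * P.eval (-(r ip)) < 0 := by nlinarith
      obtain ⟨z, hz1, hz2, hz3⟩ := sign_change hcont hlt hprod
      exact ⟨z, hz3, hz1, fun _ => hz2⟩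
  choose a ha1 ha2 ha3 using key
  refine ⟨a, ha1, ha2, fun i j hij => ?_⟩
  have h0 : 0 < (j : ℕ) := by omega
  have := ha3 j h0
  have hije : (⟨(j : ℕ) - 1, by omega⟩ : Fin N) = i := by
    apply Fin.ext
    simp only []
    omega
  rwa [hije] at this
end

section
/- Uniqueness theorem: Suppose (D, b_1,...,b_N, r_1,...,r_N) and (D', b'_1,...,b'_N, r'_1,...,r'_N) are two sets of parameters with 0 < r_1 < ... < r_N, 0 < r'_1 < ... < r'_N, all b_i, b'_i > 0, such that for two distinct values k_1 < k_2 (both ≥ 1) the corresponding characteristic polynomials agree: P_N^{k_1}[D,b,r] = P_N^{k_1}[D',b',r'] and P_N^{k_2}[D,b,r] = P_N^{k_2}[D',b',r'] as polynomials. Then D = D', r_i = r'_i and b_i = b'_i for all i. -/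
open Polynomial Finset

lemma prod_eq_of_PNk (N : ℕ) (D D' : ℝ) (b r b' r' : Fin N → ℝ) (k₁ k₂ : ℕ)
    (hk₁ : 1 ≤ k₁) (hk : k₁ < k₂)
    (h1 : PNk N D b r k₁ = PNk N D' b' r' k₁)
    (h2 : PNk N D b r k₂ = PNk N D' b' r' k₂) :
    (∏ j, (X + C (r j))) = ∏ j, (X + C (r' j)) := by
  have hc : (1 / (2 * (k₁ : ℝ) - 1) ^ 2) ≠ (1 / (2 * (k₂ : ℝ) - 1) ^ 2) := by
    have h1 : (1 : ℝ) ≤ (k₁ : ℝ) := by exact_mod_cast hk₁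
    have h2 : (k₁ : ℝ) < (k₂ : ℝ) := by exact_mod_cast hk
    have ha : (0:ℝ) < 2 * (k₁:ℝ) - 1 := by linarith
    have hb : (2*(k₁:ℝ) - 1) < 2*(k₂:ℝ) - 1 := by linarith
    have hsq : (2*(k₁:ℝ) - 1)^2 < (2*(k₂:ℝ) - 1)^2 := by nlinarith
    have := one_div_lt_one_div_of_lt (by positivity) hsq
    exact ne_of_gt this
  have key : C ((1 / (2 * (k₁ : ℝ) - 1) ^ 2) - (1 / (2 * (k₂ : ℝ) - 1) ^ 2)) * X ^ 2
        * ∏ j, (X + C (r j))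
      = C ((1 / (2 * (k₁ : ℝ) - 1) ^ 2) - (1 / (2 * (k₂ : ℝ) - 1) ^ 2)) * X ^ 2
        * ∏ j, (X + C (r' j)) := by
    have := congrArg₂ (· - ·) h1 h2
    simp only [PNk] at this
    rw [map_sub]
    ring_nf
    ring_nf at this
    linear_combination this
  refine mul_left_cancel₀ ?_ key
  refine mul_ne_zero ?_ (pow_ne_zero _ X_ne_zero)
  simpa [sub_eq_zero] using hc

lemma range_subset_of_prod_eq (N : ℕ) (r r' : Fin N → ℝ)
    (h : (∏ j, (X + C (r j))) = ∏ j, (X + C (r' j))) :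
    ∀ i, ∃ j, r j = r' i := by
  intro i
  have h0 : (∏ j, (X + C (r' j))).eval (-(r' i)) = 0 := by
    rw [eval_prod]
    exact Finset.prod_eq_zero (mem_univ i) (by simp)
  rw [← h, eval_prod] at h0
  obtain ⟨j, _, hj⟩ := Finset.prod_eq_zero_iff.mp h0
  exact ⟨j, by simp at hj; linarith⟩

lemma r_eq_of_prod_eq (N : ℕ) (r r' : Fin N → ℝ) (hr : StrictMono r) (hr' : StrictMono r')
    (h : (∏ j, (X + C (r j))) = ∏ j, (X + C (r' j))) : r = r' := by
  set s : Finset ℝ := Finset.image r univ with hs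
  have hcard : s.card = N := by
    rw [hs, Finset.card_image_of_injective _ hr.injective, card_univ, Fintype.card_fin]
  have hmem : ∀ x, r x ∈ s := fun x => Finset.mem_image_of_mem r (mem_univ x)
  have hmem' : ∀ x, r' x ∈ s := by
    intro x
    obtain ⟨j, hj⟩ := range_subset_of_prod_eq N r r' h x
    exact hj ▸ hmem j
  rw [Finset.orderEmbOfFin_unique hcard hmem hr,
    Finset.orderEmbOfFin_unique hcard hmem' hr']

theorem stmt8 (N : ℕ) (D D' : ℝ) (b r b' r' : Fin N → ℝ) (k₁ k₂ : ℕ)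
    (hk₁ : 1 ≤ k₁) (hk : k₁ < k₂)
    (hr : StrictMono r) (hrpos : ∀ i, 0 < r i) (hb : ∀ i, 0 < b i)
    (hr' : StrictMono r') (hrpos' : ∀ i, 0 < r' i) (hb' : ∀ i, 0 < b' i)
    (h1 : PNk N D b r k₁ = PNk N D' b' r' k₁)
    (h2 : PNk N D b r k₂ = PNk N D' b' r' k₂) :
    D = D' ∧ r = r' ∧ b = b' := by
  have hQ := prod_eq_of_PNk N D D' b r b' r' k₁ k₂ hk₁ hk h1 h2
  have hreq : r = r' := r_eq_of_prod_eq N r r' hr hr' hQ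
  subst hreq
  -- b = b'
  have hbeq : b = b' := by
    funext m
    have hev := congrArg (Polynomial.eval (-(r m))) h1
    simp only [PNk, eval_sub, eval_mul, eval_prod, eval_finset_sum, eval_add, eval_C, eval_pow,
      eval_X] at hev
    have hQ0 : (∏ j, (-(r m) + r j)) = 0 :=
      Finset.prod_eq_zero (mem_univ m) (by ring)
    rw [hQ0] at hev
    simp only [mul_zero, zero_sub, neg_inj] at hev
    have hsum : ∀ c : Fin N → ℝ,
        (∑ i, c i * ∏ j ∈ univ.erase i, (-(r m) + r j))
          = c m * ∏ j ∈ univ.erase m, (-(r m) + r j) := by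
      intro c
      refine Finset.sum_eq_single m (fun i _ hi => ?_) (by simp)
      refine mul_eq_zero_of_right _ ?_
      exact Finset.prod_eq_zero (Finset.mem_erase.mpr ⟨Ne.symm hi, mem_univ m⟩) (by ring)
    rw [hsum b, hsum b'] at hev
    have hP : (∏ j ∈ univ.erase m, (-(r m) + r j)) ≠ 0 := by
      refine Finset.prod_ne_zero_iff.mpr fun j hj => ?_
      have : j ≠ m := (Finset.mem_erase.mp hj).1
      have : r j ≠ r m := fun h => this (hr.injective h)
      intro h0; apply this; linarith
    exact mul_right_cancel₀ hP hev
  subst hbeq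
  refine ⟨?_, rfl, rfl⟩
  -- D = D'
  have hQne : (∏ j, (X + C (r j)) : Polynomial ℝ) ≠ 0 :=
    (monic_prod_of_monic _ _ (fun j _ => monic_X_add_C (r j))).ne_zero
  have : C D * ∏ j, (X + C (r j)) = C D' * ∏ j, (X + C (r j)) := by
    have := h1
    simp only [PNk] at this
    have h' : (C D + C (1 / (2 * (k₁ : ℝ) - 1) ^ 2) * X ^ 2) * ∏ j, (X + C (r j))
        = (C D' + C (1 / (2 * (k₁ : ℝ) - 1) ^ 2) * X ^ 2) * ∏ j, (X + C (r j)) := by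
      linear_combination this
    linear_combination h'
  have := mul_right_cancel₀ hQne this
  exact C_injective this
end

section
/- Knowing all roots determines the polynomial: if two monic real polynomials of degree N+2 have the same multiset of N+2 complex roots (counted with multiplicity), they are equal; consequently, if the multisets of complex roots of (2k−1)²·P_N^k for the two parameter sets coincide for k = k_1 and k = k_2 with k_1 ≠ k_2, then the two parameter sets (D, b, r) coincide. -/
open Polynomial Finset

noncomputable def AA (N : ℕ) (r : Fin N → ℝ) : Polynomial ℝ := ∏ j, (X + C (r j))
noncomputable def SS (N : ℕ) (b r : Fin N → ℝ) : Polynomial ℝ :=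
  ∑ i, C (b i) * ∏ j ∈ univ.erase i, (X + C (r j))

lemma AA_monic (N : ℕ) (r : Fin N → ℝ) : (AA N r).Monic :=
  monic_prod_of_monic _ _ fun j _ => monic_X_add_C (r j)

lemma AA_degree (N : ℕ) (r : Fin N → ℝ) : (AA N r).degree = N := by
  rw [degree_eq_natDegree (AA_monic N r).ne_zero, AA, natDegree_prod]
  · simp
  · intro i _; exact (monic_X_add_C (r i)).ne_zero

lemma SS_degree (N : ℕ) (b r : Fin N → ℝ) : (SS N b r).degree < N := by
  refine lt_of_le_of_lt (degree_sum_le _ _) ?_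
  rw [Finset.sup_lt_iff (by exact_mod_cast WithBot.bot_lt_coe N)]
  intro i _
  refine lt_of_le_of_lt (degree_mul_le _ _) ?_
  have hm : (∏ j ∈ univ.erase i, (X + C (r j))).Monic :=
    monic_prod_of_monic _ _ fun j _ => monic_X_add_C (r j)
  have h1 : (∏ j ∈ univ.erase i, (X + C (r j))).degree = ((N - 1 : ℕ) : WithBot ℕ) := by
    rw [degree_eq_natDegree hm.ne_zero, natDegree_prod]
    · simp [Finset.card_erase_of_mem]
    · intro j _; exact (monic_X_add_C (r j)).ne_zero
  rw [h1]
  have hN : 0 < N := Fin.pos i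
  calc degree (C (b i)) + ((N - 1 : ℕ) : WithBot ℕ) ≤ 0 + ((N-1:ℕ) : WithBot ℕ) :=
        add_le_add_left (degree_C_le) _
    _ < N := by
        rw [zero_add]
        exact_mod_cast Nat.sub_lt hN one_pos

lemma scale (N : ℕ) (D : ℝ) (b r : Fin N → ℝ) (k : ℕ) (hk : (2 * (k : ℝ) - 1) ≠ 0) :
    C ((2 * (k : ℝ) - 1) ^ 2) * PNk N D b r k =
      X ^ 2 * AA N r + C ((2 * (k : ℝ) - 1) ^ 2) * (C D * AA N r - SS N b r) := by
  have hc : ((2 * (k : ℝ) - 1) ^ 2) ≠ 0 := pow_ne_zero _ hk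
  have hC : (C ((2 * (k : ℝ) - 1) ^ 2) : Polynomial ℝ) * C (1 / (2 * (k : ℝ) - 1) ^ 2) = 1 := by
    rw [← C_mul, mul_one_div_cancel hc, C_1]
  rw [PNk, ← AA, ← SS]
  linear_combination (X ^ 2 * AA N r) * hC

lemma Q_monic (N : ℕ) (c D : ℝ) (b r : Fin N → ℝ) :
    (X ^ 2 * AA N r + C c * (C D * AA N r - SS N b r)).Monic ∧
    (X ^ 2 * AA N r + C c * (C D * AA N r - SS N b r)).degree = ((N + 2 : ℕ) : WithBot ℕ) := by
  have hm : (X ^ 2 * AA N r).Monic := (monic_X_pow 2).mul (AA_monic N r)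
  have hd : (X ^ 2 * AA N r).degree = ((N + 2 : ℕ) : WithBot ℕ) := by
    rw [degree_mul, degree_X_pow, AA_degree]
    push_cast; ring
  have hlt : (C c * (C D * AA N r - SS N b r)).degree < (X ^ 2 * AA N r).degree := by
    rw [hd]
    refine lt_of_le_of_lt (degree_mul_le _ _) ?_
    have h2 : (C D * AA N r - SS N b r).degree ≤ (N : WithBot ℕ) := by
      refine le_trans (degree_sub_le _ _) (max_le ?_ ?_)
      · refine le_trans (degree_mul_le _ _) ?_
        rw [AA_degree]
        calc degree (C D) + (N : WithBot ℕ) ≤ 0 + N := add_le_add_left degree_C_le _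
          _ = N := zero_add _
      · exact le_of_lt (SS_degree N b r)
    calc degree (C c) + (C D * AA N r - SS N b r).degree ≤ 0 + (N : WithBot ℕ) :=
          add_le_add degree_C_le h2
      _ = N := zero_add _
      _ < ((N + 2 : ℕ) : WithBot ℕ) := by exact_mod_cast Nat.lt_add_of_pos_right two_pos
  exact ⟨hm.add_of_left hlt, by rw [degree_add_eq_left_of_degree_lt hlt, hd]⟩

lemma part1 (n : ℕ) (p q : Polynomial ℝ) (hp : p.Monic) (hq : q.Monic)
    (hdp : p.degree = (n : ℕ)) (hdq : q.degree = (n : ℕ))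
    (h : (p.map (algebraMap ℝ ℂ)).roots = (q.map (algebraMap ℝ ℂ)).roots) : p = q := by
  have hinj : Function.Injective (algebraMap ℝ ℂ) := (algebraMap ℝ ℂ).injective
  apply map_injective (algebraMap ℝ ℂ) hinj
  have hpm : (p.map (algebraMap ℝ ℂ)).Monic := hp.map _
  have hqm : (q.map (algebraMap ℝ ℂ)).Monic := hq.map _
  rw [(IsAlgClosed.splits _).eq_prod_roots_of_monic hpm,
    (IsAlgClosed.splits _).eq_prod_roots_of_monic hqm, h]

lemma r_eq (N : ℕ) (r r' : Fin N → ℝ) (hr : StrictMono r) (hr' : StrictMono r')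
    (h : AA N r = AA N r') : r = r' := by
  have hXC : ∀ a : ℝ, (X + C a : Polynomial ℝ) = X - C (-a) := fun a => by
    rw [map_neg, sub_neg_eq_add]
  have hA : ∀ s : Fin N → ℝ, (AA N s).roots = Multiset.map (fun j => -s j) univ.val := by
    intro s
    rw [AA, roots_prod _ _ (AA_monic N s).ne_zero]
    simp only [hXC, roots_X_sub_C, Multiset.bind_singleton]
  have hroots : Multiset.map (fun j => -r j) univ.val = Multiset.map (fun j => -r' j) univ.val := by
    rw [← hA, ← hA, h]
  have h2 : Multiset.map r univ.val = Multiset.map r' univ.val := by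
    have := congrArg (Multiset.map (fun x : ℝ => -x)) hroots
    simpa only [Multiset.map_map, Function.comp_def, neg_neg] using this
  rw [Fin.univ_val_map, Fin.univ_val_map, Multiset.coe_eq_coe] at h2
  exact List.ofFn_injective (List.Perm.eq_of_pairwise
    (fun a b _ _ hab hba => le_antisymm hab hba)
    (List.pairwise_ofFn.2 fun _ _ hij => (hr hij).le)
    (List.pairwise_ofFn.2 fun _ _ hij => (hr' hij).le) h2)

lemma SS_eval (N : ℕ) (b r : Fin N → ℝ) (i : Fin N) (hr : Function.Injective r) :
    (SS N b r).eval (-r i) = b i * ∏ j ∈ univ.erase i, (r j - r i) := by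
  rw [SS, eval_finset_sum]
  rw [Finset.sum_eq_single i]
  · simp only [eval_mul, eval_C, eval_prod, eval_add, eval_X]
    congr 1
    exact Finset.prod_congr rfl fun j _ => by ring
  · intro t _ ht
    have hi : i ∈ univ.erase t := Finset.mem_erase.2 ⟨fun hc => ht hc.symm, mem_univ i⟩
    simp only [eval_mul, eval_C, eval_prod]
    rw [Finset.prod_eq_zero hi (by simp)]
    ring
  · simp

lemma b_eq (N : ℕ) (b b' r : Fin N → ℝ) (hr : Function.Injective r)
    (h : SS N b r = SS N b' r) : b = b' := by
  funext i
  have h1 := congrArg (fun p : Polynomial ℝ => p.eval (-r i)) h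
  simp only [SS_eval N _ r i hr] at h1
  have hne : ∏ j ∈ univ.erase i, (r j - r i) ≠ 0 := by
    refine Finset.prod_ne_zero_iff.2 fun j hj => ?_
    have : j ≠ i := (Finset.mem_erase.1 hj).1
    exact sub_ne_zero.2 fun hc => this (hr hc)
  exact mul_right_cancel₀ hne h1

theorem stmt9 (N : ℕ) :
    (∀ p q : Polynomial ℝ, p.Monic → q.Monic →
        p.degree = (N + 2 : ℕ) → q.degree = (N + 2 : ℕ) →
        (p.map (algebraMap ℝ ℂ)).roots = (q.map (algebraMap ℝ ℂ)).roots → p = q) ∧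
    (∀ (D D' : ℝ) (b r b' r' : Fin N → ℝ) (k₁ k₂ : ℕ), 1 ≤ k₁ → k₁ < k₂ →
        StrictMono r → (∀ i, 0 < r i) → (∀ i, 0 < b i) →
        StrictMono r' → (∀ i, 0 < r' i) → (∀ i, 0 < b' i) →
        (∀ k ∈ ({k₁, k₂} : Set ℕ),
          ((C ((2 * (k : ℝ) - 1) ^ 2) * PNk N D b r k).map (algebraMap ℝ ℂ)).roots =
            ((C ((2 * (k : ℝ) - 1) ^ 2) * PNk N D' b' r' k).map (algebraMap ℝ ℂ)).roots) →
        D = D' ∧ r = r' ∧ b = b') := by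
  constructor
  · exact fun p q hp hq hdp hdq h => part1 (N + 2) p q hp hq hdp hdq h
  · intro D D' b r b' r' k₁ k₂ hk₁ hk₁₂ hr hrpos hbpos hr' hrpos' hbpos' h
    have key : ∀ k : ℕ, (2 * (k : ℝ) - 1) ≠ 0 → k ∈ ({k₁, k₂} : Set ℕ) →
        X ^ 2 * AA N r + C ((2 * (k : ℝ) - 1) ^ 2) * (C D * AA N r - SS N b r) =
        X ^ 2 * AA N r' + C ((2 * (k : ℝ) - 1) ^ 2) * (C D' * AA N r' - SS N b' r') := by
      intro k hk hkmem
      have e1 := scale N D b r k hk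
      have e2 := scale N D' b' r' k hk
      rw [← e1, ← e2]
      refine part1 (N + 2) _ _ ?_ ?_ ?_ ?_ (h k hkmem)
      · exact e1 ▸ (Q_monic N _ D b r).1
      · exact e2 ▸ (Q_monic N _ D' b' r').1
      · exact e1 ▸ (Q_monic N _ D b r).2
      · exact e2 ▸ (Q_monic N _ D' b' r').2
    have hk1r : (1 : ℝ) ≤ (k₁ : ℝ) := by exact_mod_cast hk₁
    have hk2r : (k₁ : ℝ) < (k₂ : ℝ) := by exact_mod_cast hk₁₂
    have h1ne : (2 * (k₁ : ℝ) - 1) ≠ 0 := by linarith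
    have h2ne : (2 * (k₂ : ℝ) - 1) ≠ 0 := by linarith
    have hcc : (2 * (k₁ : ℝ) - 1) ^ 2 ≠ (2 * (k₂ : ℝ) - 1) ^ 2 := by
      have : (2 * (k₁ : ℝ) - 1) ^ 2 < (2 * (k₂ : ℝ) - 1) ^ 2 := by nlinarith
      exact ne_of_lt this
    have E1 := key k₁ h1ne (by left; rfl)
    have E2 := key k₂ h2ne (by right; rfl)
    have hU : C D * AA N r - SS N b r = C D' * AA N r' - SS N b' r' := by
      have h3 : C ((2 * (k₁ : ℝ) - 1) ^ 2 - (2 * (k₂ : ℝ) - 1) ^ 2) *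
          ((C D * AA N r - SS N b r) - (C D' * AA N r' - SS N b' r')) = 0 := by
        rw [C_sub]; linear_combination E1 - E2
      rcases mul_eq_zero.1 h3 with hc | hc
      · exact absurd (C_eq_zero.1 hc) (sub_ne_zero.2 hcc)
      · exact sub_eq_zero.1 hc
    have hAA : AA N r = AA N r' := by
      have h4 : (X ^ 2 : Polynomial ℝ) * (AA N r - AA N r') = 0 := by
        linear_combination E1 - C ((2 * (k₁ : ℝ) - 1) ^ 2) * hU
      rcases mul_eq_zero.1 h4 with hc | hc
      · exact absurd hc (pow_ne_zero 2 X_ne_zero)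
      · exact sub_eq_zero.1 hc
    have hreq : r = r' := r_eq N r r' hr hr' hAA
    subst hreq
    rw [← hAA] at hU
    have hD : D = D' := by
      by_contra hD
      have hCne : D - D' ≠ 0 := sub_ne_zero.2 hD
      have h5 : C (D - D') * AA N r = SS N b r - SS N b' r := by
        rw [C_sub]; linear_combination hU
      have hdL : (C (D - D') * AA N r).degree = (N : WithBot ℕ) := by
        rw [degree_mul, degree_C hCne, AA_degree, zero_add]
      have hdR : (SS N b r - SS N b' r).degree < (N : WithBot ℕ) :=
        lt_of_le_of_lt (degree_sub_le _ _) (max_lt (SS_degree N b r) (SS_degree N b' r))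
      rw [← h5, hdL] at hdR
      exact lt_irrefl _ hdR
    subst hD
    have hSS : SS N b r = SS N b' r := by linear_combination -hU
    exact ⟨rfl, rfl, b_eq N b b' r hr.injective hSS⟩
end
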